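/- For any n ≥ 2 and any τ_{i,0}, τ_{i,1} with 1 ≥ τ_{i,0} ≥ τ_{i,1} ≥ 0, the maximal n-local chain score satisfies S*_{n-Chain} = ((τ_{1,0}² + τ_{1,1}²)(τ_{n,0}² + τ_{n,1}²))^{1/4} ∏_{i=2}^{n−1}√(τ_{i,0}) ≤ √2, with equality iff τ_{1,0} = τ_{1,1} = τ_{n,0} = τ_{n,1} = 1 and τ_{i,0} = 1 for all 2 ≤ i ≤ n−1. -/
import Mathlib


open Finset

private lemma four_rpow : ((4:ℝ)) ^ ((1:ℝ)/4) = Real.sqrt 2 := by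
  rw [show (4:ℝ) = 2 ^ (2:ℕ) by norm_num, ← Real.rpow_natCast 2 2,
    ← Real.rpow_mul (by norm_num : (0:ℝ) ≤ 2), Real.sqrt_eq_rpow]
  norm_num

set_option maxHeartbeats 1000000 in
private lemma chain_aux (a b c d P : ℝ)
    (ha1 : a ≤ 1) (hb : b ≤ a) (hb0 : 0 ≤ b)
    (hc1 : c ≤ 1) (hd : d ≤ c) (hd0 : 0 ≤ d)
    (hP0 : 0 ≤ P) (hP1 : P ≤ 1) :
    ((a^2 + b^2) * (c^2 + d^2)) ^ ((1:ℝ)/4) * P ≤ Real.sqrt 2 ∧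
      (((a^2 + b^2) * (c^2 + d^2)) ^ ((1:ℝ)/4) * P = Real.sqrt 2 ↔
        (a = 1 ∧ b = 1 ∧ c = 1 ∧ d = 1 ∧ P = 1)) := by
  have ha0 : 0 ≤ a := hb0.trans hb
  have hc0 : 0 ≤ c := hd0.trans hd
  have hb1 : b ≤ 1 := hb.trans ha1
  have hd1 : d ≤ 1 := hd.trans hc1
  have hAnn : (0:ℝ) ≤ (a^2 + b^2) * (c^2 + d^2) := by positivity
  have hS1le : a^2 + b^2 ≤ 2 := by nlinarith
  have hS2le : c^2 + d^2 ≤ 2 := by nlinarith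
  have hS1nn : (0:ℝ) ≤ a^2 + b^2 := by positivity
  have hS2nn : (0:ℝ) ≤ c^2 + d^2 := by positivity
  have hA4 : (a^2 + b^2) * (c^2 + d^2) ≤ 4 := by nlinarith
  have hq : ((a^2 + b^2) * (c^2 + d^2)) ^ ((1:ℝ)/4) ≤ Real.sqrt 2 := by
    calc ((a^2 + b^2) * (c^2 + d^2)) ^ ((1:ℝ)/4)
        ≤ (4:ℝ) ^ ((1:ℝ)/4) := Real.rpow_le_rpow hAnn hA4 (by norm_num)
      _ = Real.sqrt 2 := four_rpow
  have hqnn : 0 ≤ ((a^2 + b^2) * (c^2 + d^2)) ^ ((1:ℝ)/4) := Real.rpow_nonneg hAnn _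
  have hbound : ((a^2 + b^2) * (c^2 + d^2)) ^ ((1:ℝ)/4) * P ≤ Real.sqrt 2 := by
    calc ((a^2 + b^2) * (c^2 + d^2)) ^ ((1:ℝ)/4) * P
        ≤ ((a^2 + b^2) * (c^2 + d^2)) ^ ((1:ℝ)/4) * 1 :=
          mul_le_mul_of_nonneg_left hP1 hqnn
      _ = ((a^2 + b^2) * (c^2 + d^2)) ^ ((1:ℝ)/4) := mul_one _
      _ ≤ Real.sqrt 2 := hq
  refine ⟨hbound, ?_, ?_⟩
  · intro heq
    have hs2 : (0:ℝ) < Real.sqrt 2 := Real.sqrt_pos.mpr (by norm_num)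
    have hsq : Real.sqrt 2 ^ 2 = 2 := Real.sq_sqrt (by norm_num)
    have hstep : Real.sqrt 2 ≤ Real.sqrt 2 * P := by
      calc Real.sqrt 2 = ((a^2 + b^2) * (c^2 + d^2)) ^ ((1:ℝ)/4) * P := heq.symm
        _ ≤ Real.sqrt 2 * P := mul_le_mul_of_nonneg_right hq hP0
    have hPeq : P = 1 := le_antisymm hP1 (by nlinarith)
    rw [hPeq, mul_one] at heq
    have h4 : (((a^2 + b^2) * (c^2 + d^2)) ^ ((1:ℝ)/4)) ^ (4:ℕ)
        = (a^2 + b^2) * (c^2 + d^2) := by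
      rw [← Real.rpow_natCast (((a^2 + b^2) * (c^2 + d^2)) ^ ((1:ℝ)/4)) 4,
        ← Real.rpow_mul hAnn]
      norm_num
    rw [heq] at h4
    have h44 : (Real.sqrt 2) ^ (4:ℕ) = 4 := by
      rw [show (4:ℕ) = 2 * 2 from rfl, pow_mul, hsq]; norm_num
    have hA : (a^2 + b^2) * (c^2 + d^2) = 4 := h4.symm.trans h44
    clear heq h4 hq hqnn hbound hstep
    have hS1 : a^2 + b^2 = 2 := le_antisymm hS1le (by nlinarith)
    have hS2 : c^2 + d^2 = 2 := le_antisymm hS2le (by nlinarith)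
    have hae : a = 1 := le_antisymm ha1 (by nlinarith [mul_nonneg (sub_nonneg.mpr ha1) ha0])
    have hbe : b = 1 := le_antisymm hb1 (by nlinarith [mul_nonneg (sub_nonneg.mpr hb1) hb0])
    have hce : c = 1 := le_antisymm hc1 (by nlinarith [mul_nonneg (sub_nonneg.mpr hc1) hc0])
    have hde : d = 1 := le_antisymm hd1 (by nlinarith [mul_nonneg (sub_nonneg.mpr hd1) hd0])
    exact ⟨hae, hbe, hce, hde, hPeq⟩
  · rintro ⟨ra, rb, rc, rd, rP⟩
    rw [ra, rb, rc, rd, rP, mul_one]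
    norm_num
    exact four_rpow

private lemma prod_mem_eq_one {α : Type*} [DecidableEq α] {s : Finset α} {f : α → ℝ}
    (h0 : ∀ i ∈ s, 0 ≤ f i) (h1 : ∀ i ∈ s, f i ≤ 1)
    (hp : ∏ i ∈ s, f i = 1) : ∀ j ∈ s, f j = 1 := by
  intro j hj
  refine le_antisymm (h1 j hj) ?_
  have hmul : f j * ∏ i ∈ s.erase j, f i = ∏ i ∈ s, f i :=
    Finset.mul_prod_erase s f hj
  have hle : ∏ i ∈ s.erase j, f i ≤ 1 :=
    Finset.prod_le_one (fun i hi => h0 i (Finset.mem_of_mem_erase hi))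
      (fun i hi => h1 i (Finset.mem_of_mem_erase hi))
  have hnn : 0 ≤ ∏ i ∈ s.erase j, f i :=
    Finset.prod_nonneg (fun i hi => h0 i (Finset.mem_of_mem_erase hi))
  nlinarith [h0 j hj]

theorem chain_score_tsirelson_bound (n : ℕ) (hn : 2 ≤ n)
    (τ : Fin n → Fin 2 → ℝ)
    (h1 : ∀ i, τ i 0 ≤ 1) (h2 : ∀ i, τ i 1 ≤ τ i 0) (h3 : ∀ i, 0 ≤ τ i 1) :
    (((τ ⟨0, by omega⟩ 0) ^ 2 + (τ ⟨0, by omega⟩ 1) ^ 2) *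
          ((τ ⟨n - 1, by omega⟩ 0) ^ 2 + (τ ⟨n - 1, by omega⟩ 1) ^ 2)) ^ ((1 : ℝ) / 4) *
        (∏ i ∈ Finset.univ.filter (fun i : Fin n => 1 ≤ (i : ℕ) ∧ (i : ℕ) < n - 1),
          Real.sqrt (τ i 0)) ≤ Real.sqrt 2 ∧
    ((((τ ⟨0, by omega⟩ 0) ^ 2 + (τ ⟨0, by omega⟩ 1) ^ 2) *
          ((τ ⟨n - 1, by omega⟩ 0) ^ 2 + (τ ⟨n - 1, by omega⟩ 1) ^ 2)) ^ ((1 : ℝ) / 4) *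
        (∏ i ∈ Finset.univ.filter (fun i : Fin n => 1 ≤ (i : ℕ) ∧ (i : ℕ) < n - 1),
          Real.sqrt (τ i 0)) = Real.sqrt 2 ↔
      (τ ⟨0, by omega⟩ 0 = 1 ∧ τ ⟨0, by omega⟩ 1 = 1 ∧
        τ ⟨n - 1, by omega⟩ 0 = 1 ∧ τ ⟨n - 1, by omega⟩ 1 = 1 ∧
        ∀ i : Fin n, 1 ≤ (i : ℕ) → (i : ℕ) < n - 1 → τ i 0 = 1)) := by
  have hτ0 : ∀ i, (0:ℝ) ≤ τ i 0 := fun i => (h3 i).trans (h2 i)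
  set s := Finset.univ.filter (fun i : Fin n => 1 ≤ (i : ℕ) ∧ (i : ℕ) < n - 1) with hs
  set P := ∏ i ∈ s, Real.sqrt (τ i 0) with hPdef
  have hP0 : 0 ≤ P := Finset.prod_nonneg (fun i _ => Real.sqrt_nonneg _)
  have hP1 : P ≤ 1 := Finset.prod_le_one (fun i _ => Real.sqrt_nonneg _)
    (fun i _ => Real.sqrt_le_one.mpr (h1 i))
  obtain ⟨hb, hiff⟩ := chain_aux (τ ⟨0, by omega⟩ 0) (τ ⟨0, by omega⟩ 1)
    (τ ⟨n - 1, by omega⟩ 0) (τ ⟨n - 1, by omega⟩ 1) P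
    (h1 _) (h2 _) (h3 _) (h1 _) (h2 _) (h3 _) hP0 hP1
  refine ⟨hb, ?_⟩
  rw [hiff]
  constructor
  · rintro ⟨ra, rb, rc, rd, rP⟩
    refine ⟨ra, rb, rc, rd, ?_⟩
    intro i hi1 hi2
    have hmem : i ∈ s := by simp [hs, hi1, hi2]
    have := prod_mem_eq_one (s := s) (f := fun i => Real.sqrt (τ i 0))
      (fun i _ => Real.sqrt_nonneg _) (fun i _ => Real.sqrt_le_one.mpr (h1 i)) rP i hmem
    exact Real.sqrt_eq_one.mp this
  · rintro ⟨ra, rb, rc, rd, hall⟩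
    refine ⟨ra, rb, rc, rd, ?_⟩
    rw [hPdef]
    apply Finset.prod_eq_one
    intro i hi
    rw [hs, Finset.mem_filter] at hi
    rw [hall i hi.2.1 hi.2.2]
    exact Real.sqrt_one
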